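/- Hodge decomposition for a finite-dimensional cochain complex: let V^{k−1} →^{d^{k−1}} V^k →^{d^k} V^{k+1} be finite-dimensional inner product spaces with d^k ∘ d^{k−1} = 0. Then V^k = ran(d^{k−1}) ⊕ ran((d^k)*) ⊕ H^k as an orthogonal direct sum, where H^k = ker(d^k) ∩ ker((d^{k−1})*) and * denotes the adjoint; moreover H^k is isomorphic to the cohomology ker(d^k)/ran(d^{k−1}). -/

import Mathlib

/-- Hodge decomposition for a finite-dimensional cochain complex
`V₁ →^{d₁} V₂ →^{d₂} V₃` with `d₂ ∘ d₁ = 0`: the middle space decomposes as the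
orthogonal direct sum `V₂ = ran d₁ ⊕ ran d₂* ⊕ H` with
`H = ker d₂ ⊓ ker d₁*` the harmonic space, and `H` is isomorphic to the
cohomology `ker d₂ / ran d₁`. -/
theorem hodge_decomposition_finite_dimensional {V₁ V₂ V₃ : Type*}
    [NormedAddCommGroup V₁] [InnerProductSpace ℝ V₁] [FiniteDimensional ℝ V₁]
    [NormedAddCommGroup V₂] [InnerProductSpace ℝ V₂] [FiniteDimensional ℝ V₂]
    [NormedAddCommGroup V₃] [InnerProductSpace ℝ V₃] [FiniteDimensional ℝ V₃]
    (d₁ : V₁ →ₗ[ℝ] V₂) (d₂ : V₂ →ₗ[ℝ] V₃)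
    (hdd : ∀ x : V₁, d₂ (d₁ x) = 0) :
    (∀ x ∈ LinearMap.range d₁, ∀ y ∈ LinearMap.range (LinearMap.adjoint d₂),
      (inner ℝ x y : ℝ) = 0) ∧
    (∀ x ∈ LinearMap.range d₁,
      ∀ y ∈ LinearMap.ker d₂ ⊓ LinearMap.ker (LinearMap.adjoint d₁),
      (inner ℝ x y : ℝ) = 0) ∧
    (∀ x ∈ LinearMap.range (LinearMap.adjoint d₂),
      ∀ y ∈ LinearMap.ker d₂ ⊓ LinearMap.ker (LinearMap.adjoint d₁),
      (inner ℝ x y : ℝ) = 0) ∧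
    (LinearMap.range d₁ ⊔ LinearMap.range (LinearMap.adjoint d₂) ⊔
      (LinearMap.ker d₂ ⊓ LinearMap.ker (LinearMap.adjoint d₁)) = ⊤) ∧
    Nonempty
      ((LinearMap.ker d₂ ⊓ LinearMap.ker (LinearMap.adjoint d₁) : Submodule ℝ V₂) ≃ₗ[ℝ]
        (LinearMap.ker d₂ ⧸
          Submodule.comap (LinearMap.ker d₂).subtype (LinearMap.range d₁))) := by
  classical
  set H : Submodule ℝ V₂ := LinearMap.ker d₂ ⊓ LinearMap.ker (LinearMap.adjoint d₁) with hH
  have h1 : ∀ x ∈ LinearMap.range d₁, ∀ y ∈ LinearMap.range (LinearMap.adjoint d₂),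
      (inner ℝ x y : ℝ) = 0 := by
    rintro _ ⟨a, rfl⟩ _ ⟨b, rfl⟩
    rw [LinearMap.adjoint_inner_right, hdd, inner_zero_left]
  have h2 : ∀ x ∈ LinearMap.range d₁, ∀ y ∈ H, (inner ℝ x y : ℝ) = 0 := by
    rintro _ ⟨a, rfl⟩ y ⟨_, hy2⟩
    rw [← LinearMap.adjoint_inner_right, hy2, inner_zero_right]
  have h3 : ∀ x ∈ LinearMap.range (LinearMap.adjoint d₂), ∀ y ∈ H,
      (inner ℝ x y : ℝ) = 0 := by
    rintro _ ⟨a, rfl⟩ y ⟨hy1, _⟩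
    rw [LinearMap.adjoint_inner_left, hy1, inner_zero_right]
  have hHorth : H = (LinearMap.range d₁ ⊔ LinearMap.range (LinearMap.adjoint d₂))ᗮ := by
    ext y
    rw [Submodule.mem_orthogonal]
    constructor
    · intro hy u hu
      obtain ⟨a, ha, b, hb, rfl⟩ := Submodule.mem_sup.mp hu
      rw [inner_add_left, h2 a ha y hy, h3 b hb y hy, add_zero]
    · intro hy
      constructor
      · have : ∀ z : V₃, (inner ℝ (d₂ y) z : ℝ) = 0 := by
          intro z
          rw [real_inner_comm, ← LinearMap.adjoint_inner_left]
          exact hy _ (Submodule.mem_sup_right ⟨z, rfl⟩)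
        exact inner_self_eq_zero.mp (this (d₂ y))
      · have : ∀ z : V₁, (inner ℝ (LinearMap.adjoint d₁ y) z : ℝ) = 0 := by
          intro z
          rw [LinearMap.adjoint_inner_left, real_inner_comm]
          exact hy _ (Submodule.mem_sup_left ⟨z, rfl⟩)
        exact inner_self_eq_zero.mp (this (LinearMap.adjoint d₁ y))
  have h4 : LinearMap.range d₁ ⊔ LinearMap.range (LinearMap.adjoint d₂) ⊔ H = ⊤ := by
    rw [hHorth]
    exact Submodule.sup_orthogonal_of_hasOrthogonalProjection
  refine ⟨h1, h2, h3, h4, ?_⟩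
  set K := LinearMap.ker d₂
  set R : Submodule ℝ K := Submodule.comap K.subtype (LinearMap.range d₁)
  have hHK : H ≤ K := inf_le_left
  have e1 : (H : Submodule ℝ V₂) ≃ₗ[ℝ] Submodule.comap K.subtype H :=
    (Submodule.comapSubtypeEquivOfLe hHK).symm
  have heq : Submodule.comap K.subtype H = Rᗮ := by
    ext y
    simp only [Submodule.mem_comap, Submodule.mem_orthogonal]
    constructor
    · rintro hyH ⟨u, hu⟩ hu'
      exact h2 u hu' (K.subtype y) hyH
    · intro hy
      refine ⟨y.2, ?_⟩
      have : ∀ z : V₁, (inner ℝ (LinearMap.adjoint d₁ (K.subtype y)) z : ℝ) = 0 := by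
        intro z
        rw [LinearMap.adjoint_inner_left]
        have hz : d₁ z ∈ K := LinearMap.mem_ker.mpr (hdd z)
        have := hy ⟨d₁ z, hz⟩ (Submodule.mem_comap.mpr ⟨z, rfl⟩)
        rw [real_inner_comm]
        exact this
      exact inner_self_eq_zero.mp (this _)
  have e2 : (Submodule.comap K.subtype H : Submodule ℝ K) ≃ₗ[ℝ] (K ⧸ R) :=
    (LinearEquiv.ofEq _ _ heq).trans
      ((R.quotientEquivOfIsCompl Rᗮ R.isCompl_orthogonal_of_hasOrthogonalProjection).symm)
  exact ⟨e1.trans e2⟩
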